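/- Let $v_1,\ldots,v_n$ be nonzero real numbers with $|v_i| \le 1$ and $\varepsilon_1,\ldots,\varepsilon_n$ independent Rademacher variables. Then for every real $x$, $\mathbb{P}(v_1\varepsilon_1 + \cdots + v_n\varepsilon_n = x) \le \binom{n}{\lfloor n/2 \rfloor}/2^n$. (Erdős's Littlewood–Offord theorem) -/

import Mathlib

open MeasureTheory ProbabilityTheory

/-- A Rademacher random variable takes values `1` and `-1` each with probability `1/2`. -/
def IsRademacher {Ω : Type*} [MeasurableSpace Ω] (μ : Measure Ω) (f : Ω → ℝ) : Prop :=
  μ {ω | f ω = 1} = 1 / 2 ∧ μ {ω | f ω = -1} = 1 / 2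

theorem erdos_littlewood_offord
    {Ω : Type*} [MeasurableSpace Ω] (μ : Measure Ω) [IsProbabilityMeasure μ]
    (n : ℕ) (v : ℕ → ℝ) (hv0 : ∀ i < n, v i ≠ 0) (hv1 : ∀ i < n, |v i| ≤ 1)
    (ε : ℕ → Ω → ℝ) (hmeas : ∀ i, Measurable (ε i))
    (hindep : iIndepFun ε μ)
    (hrad : ∀ i, IsRademacher μ (ε i))
    (x : ℝ) :
    μ {ω | ∑ i ∈ Finset.range n, v i * ε i ω = x}
      ≤ (n.choose (n / 2) : ENNReal) / 2 ^ n := by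
  classical
  set s : ℕ → ℝ := fun i => if v i < 0 then -1 else 1 with hs_def
  have hs_pm : ∀ i, s i = 1 ∨ s i = -1 := by
    intro i; by_cases h : v i < 0 <;> simp [hs_def, h]
  have hvs : ∀ i, v i * s i = |v i| := by
    intro i; by_cases h : v i < 0
    · rw [hs_def]; simp only [if_pos h]; rw [abs_of_neg h]; ring
    · rw [hs_def]; simp only [if_neg h]; rw [abs_of_nonneg (not_lt.1 h)]; ring
  set σ : Finset (Fin n) → ℕ → ℝ := fun S i =>
    if h : i < n then (if (⟨i, h⟩ : Fin n) ∈ S then s i else -s i) else 1 with hσ_def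
  set A : Finset (Fin n) → Set Ω := fun S => ⋂ i ∈ Finset.range n, ε i ⁻¹' {σ S i} with hA_def
  set f : Finset (Fin n) → ℝ := fun S => ∑ i : Fin n,
    (if i ∈ S then |v i.val| else -|v i.val|) with hf_def
  -- on A S the sum equals f S
  have hsum : ∀ S, ∀ ω ∈ A S, ∑ i ∈ Finset.range n, v i * ε i ω = f S := by
    intro S ω hω
    rw [← Fin.sum_univ_eq_sum_range (fun i => v i * ε i ω) n]
    refine Finset.sum_congr rfl fun i _ => ?_
    have hεi : ε i.val ω = σ S i.val := by
      simp only [hA_def, Set.mem_iInter, Set.mem_preimage, Set.mem_singleton_iff] at hω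
      exact hω i.val (Finset.mem_range.2 i.isLt)
    rw [hεi, hσ_def]
    simp only [dif_pos i.isLt, Fin.eta]
    by_cases h : i ∈ S
    · rw [if_pos h, if_pos h, hvs]
    · rw [if_neg h, if_neg h, ← hvs i]; ring
  set 𝒜 : Finset (Finset (Fin n)) := Finset.univ.filter (fun S => f S = x) with h𝒜_def
  have hanti : IsAntichain (· ⊆ ·) (𝒜 : Set (Finset (Fin n))) := by
    intro S hS T hT hne hsub
    simp only [h𝒜_def, Finset.coe_filter, Set.mem_setOf_eq] at hS hT
    have hlt : f S < f T := by
      refine Finset.sum_lt_sum (fun i _ => ?_) ?_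
      · by_cases h : i ∈ S
        · rw [if_pos h, if_pos (hsub h)]
        · rw [if_neg h]
          by_cases h' : i ∈ T
          · rw [if_pos h']; exact (neg_abs_le _).trans (le_abs_self _)
          · rw [if_neg h']
      · obtain ⟨j, hjT, hjS⟩ := Finset.exists_of_ssubset (ssubset_of_ne_of_subset hne hsub)
        refine ⟨j, Finset.mem_univ j, ?_⟩
        have hpos : 0 < |v j.val| := abs_pos.2 (hv0 j.val j.isLt)
        rw [if_neg hjS, if_pos hjT]; linarith
    rw [hS.2, hT.2] at hlt; exact lt_irrefl x hlt
  have hcard : 𝒜.card ≤ n.choose (n / 2) := by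
    have := IsAntichain.sperner hanti
    rwa [Fintype.card_fin] at this
  -- measure of each atom
  have hhalf : ∀ (c : ℝ), c = 1 ∨ c = -1 → ∀ i, μ (ε i ⁻¹' {c}) = 1 / 2 := by
    intro c hc i
    rcases hc with h | h <;> subst h
    · exact (hrad i).1
    · exact (hrad i).2
  have hσ_pm : ∀ S i, σ S i = 1 ∨ σ S i = -1 := by
    intro S i
    by_cases h : i < n
    · simp only [hσ_def, dif_pos h]
      by_cases hS : (⟨i, h⟩ : Fin n) ∈ S
      · rw [if_pos hS]; exact hs_pm i
      · rw [if_neg hS]; rcases hs_pm i with h' | h' <;> rw [h'] <;> simp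
    · simp [hσ_def, dif_neg h]
  have hmeasA : ∀ S, μ (A S) = (1 / 2 : ENNReal) ^ n := by
    intro S
    rw [hA_def]
    rw [hindep.meas_biInter (S := Finset.range n) (s := fun i => ε i ⁻¹' {σ S i})
      (fun i _ => ⟨{σ S i}, measurableSet_singleton _, rfl⟩)]
    rw [Finset.prod_congr rfl (fun i _ => hhalf (σ S i) (hσ_pm S i) i),
      Finset.prod_const, Finset.card_range]
  -- null set
  set N : Set Ω := ⋃ i ∈ Finset.range n, {ω | ε i ω ≠ 1 ∧ ε i ω ≠ -1} with hN_def
  have hNnull : μ N = 0 := by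
    rw [hN_def]
    refine le_antisymm (le_trans (measure_biUnion_finset_le _ _) ?_) (zero_le)
    have : ∀ i ∈ Finset.range n, μ {ω | ε i ω ≠ 1 ∧ ε i ω ≠ -1} = 0 := by
      intro i _
      have hset : {ω | ε i ω ≠ 1 ∧ ε i ω ≠ -1} = ({ω | ε i ω = 1} ∪ {ω | ε i ω = -1})ᶜ := by
        ext ω; simp [not_or]
      have hdisj : Disjoint {ω | ε i ω = 1} {ω | ε i ω = -1} := by
        rw [Set.disjoint_left]; intro ω h1 h2
        simp only [Set.mem_setOf_eq] at h1 h2; rw [h1] at h2; norm_num at h2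
      have hm1 : MeasurableSet {ω | ε i ω = (1:ℝ)} := hmeas i (measurableSet_singleton 1)
      have hm2 : MeasurableSet {ω | ε i ω = (-1:ℝ)} := hmeas i (measurableSet_singleton (-1))
      have hu : μ ({ω | ε i ω = 1} ∪ {ω | ε i ω = -1}) = 1 := by
        rw [measure_union hdisj hm2, (hrad i).1, (hrad i).2]
        rw [one_div]; exact ENNReal.inv_two_add_inv_two
      rw [hset, measure_compl (hm1.union hm2) (measure_ne_top μ _), hu, measure_univ,
        tsub_self]
    rw [Finset.sum_congr rfl this, Finset.sum_const_zero]
  -- covering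
  have hcover : {ω | ∑ i ∈ Finset.range n, v i * ε i ω = x} ⊆ N ∪ ⋃ S ∈ 𝒜, A S := by
    intro ω hω
    by_cases hN : ω ∈ N
    · exact Or.inl hN
    · right
      have hpm : ∀ i < n, ε i ω = 1 ∨ ε i ω = -1 := by
        intro i hi
        by_contra h
        push_neg at h
        exact hN (Set.mem_biUnion (Finset.mem_range.2 hi) ⟨h.1, h.2⟩)
      set S : Finset (Fin n) := Finset.univ.filter (fun i : Fin n => ε i.val ω = s i.val)
        with hS_def
      have hωA : ω ∈ A S := by
        rw [hA_def]
        simp only [Set.mem_iInter, Set.mem_preimage, Set.mem_singleton_iff]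
        intro i hi
        have hi' : i < n := Finset.mem_range.1 hi
        simp only [hσ_def, dif_pos hi']
        by_cases hS : (⟨i, hi'⟩ : Fin n) ∈ S
        · rw [if_pos hS]
          exact (Finset.mem_filter.1 hS).2
        · rw [if_neg hS]
          have hne : ε i ω ≠ s i := fun h =>
            hS (Finset.mem_filter.2 ⟨Finset.mem_univ _, h⟩)
          rcases hpm i hi' with h | h <;> rcases hs_pm i with h' | h'
          · exact absurd (h.trans h'.symm) hne
          · rw [h, h']; norm_num
          · rw [h, h']
          · exact absurd (h.trans h'.symm) hne
      exact Set.mem_biUnion (Finset.mem_filter.2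
        ⟨Finset.mem_univ _, by rw [← hsum S ω hωA]; exact hω⟩) hωA
  -- finish
  calc μ {ω | ∑ i ∈ Finset.range n, v i * ε i ω = x}
      ≤ μ (N ∪ ⋃ S ∈ 𝒜, A S) := measure_mono hcover
    _ ≤ μ N + μ (⋃ S ∈ 𝒜, A S) := measure_union_le _ _
    _ = μ (⋃ S ∈ 𝒜, A S) := by rw [hNnull, zero_add]
    _ ≤ ∑ S ∈ 𝒜, μ (A S) := measure_biUnion_finset_le _ _
    _ = 𝒜.card * (1 / 2 : ENNReal) ^ n := by
        rw [Finset.sum_congr rfl (fun S _ => hmeasA S), Finset.sum_const, nsmul_eq_mul]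
    _ ≤ (n.choose (n / 2) : ENNReal) * (1 / 2 : ENNReal) ^ n := by
        exact mul_le_mul_left (by exact_mod_cast hcard) _
    _ = (n.choose (n / 2) : ENNReal) / 2 ^ n := by
        rw [one_div, ← ENNReal.inv_pow, ← div_eq_mul_inv]
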